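/- Consider the dihedral quandle structure on ZMod 3, with operation a ▷ b := 2*b − a, and equip ZMod 3 with the indiscrete topology (so every 1-simplex is a continuous path). Then the quotient of the free abelian group on ZMod 3 by the subgroup generated by all elements (of a) − (of (2*b − a)), for a, b ∈ ZMod 3, is isomorphic as an additive group to ℤ. (This quotient is the zeroth topological quandle homology group H₀(ℤ₃).) -/

import Mathlib

/-- For the dihedral quandle `ℤ₃` (operation `a ▷ b = 2b - a`) with the indiscrete
topology (so all pairs of points are joined by paths), the zeroth topological quandle
homology group — the quotient of the free abelian group on `ℤ₃` by the subgroup generated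
by all elements `of a - of (2b - a)` — is isomorphic to `ℤ`. -/
theorem H0_dihedral_ZMod3_indiscrete :
    Nonempty ((FreeAbelianGroup (ZMod 3) ⧸ AddSubgroup.closure
      {z : FreeAbelianGroup (ZMod 3) | ∃ a b : ZMod 3,
        z = FreeAbelianGroup.of a - FreeAbelianGroup.of (2 * b - a)}) ≃+ ℤ) := by
  set S : Set (FreeAbelianGroup (ZMod 3)) :=
    {z : FreeAbelianGroup (ZMod 3) | ∃ a b : ZMod 3,
        z = FreeAbelianGroup.of a - FreeAbelianGroup.of (2 * b - a)} with hS
  let φ : FreeAbelianGroup (ZMod 3) →+ ℤ := FreeAbelianGroup.lift (fun _ => (1 : ℤ))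
  have hle : AddSubgroup.closure S ≤ φ.ker := by
    rw [AddSubgroup.closure_le]
    rintro z ⟨a, b, rfl⟩
    simp [φ, AddMonoidHom.mem_ker, FreeAbelianGroup.lift_apply_of]
  let φ' := QuotientAddGroup.lift _ φ hle
  let ψ : ℤ →+ (FreeAbelianGroup (ZMod 3) ⧸ AddSubgroup.closure S) :=
    zmultiplesHom _ (QuotientAddGroup.mk (FreeAbelianGroup.of (0 : ZMod 3)))
  have key : ∀ a : ZMod 3,
      (QuotientAddGroup.mk (FreeAbelianGroup.of a) :
        FreeAbelianGroup (ZMod 3) ⧸ AddSubgroup.closure S)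
      = QuotientAddGroup.mk (FreeAbelianGroup.of (0 : ZMod 3)) := by
    intro a
    rw [QuotientAddGroup.eq]
    have : -FreeAbelianGroup.of a + FreeAbelianGroup.of (0 : ZMod 3)
        = -(FreeAbelianGroup.of a - FreeAbelianGroup.of (2 * (2 * a) - a)) := by
      have h3 : ∀ x : ZMod 3, 2 * (2 * x) - x = 0 := by decide
      rw [h3 a]; abel
    rw [this]
    exact neg_mem (AddSubgroup.subset_closure ⟨a, 2 * a, rfl⟩)
  refine ⟨AddMonoidHom.toAddEquiv φ' ψ ?_ ?_⟩
  · apply QuotientAddGroup.addMonoidHom_ext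
    ext a
    simp [ψ, φ', φ, FreeAbelianGroup.lift_apply_of, key a]
  · apply AddMonoidHom.ext_int
    simp [φ', ψ, φ, FreeAbelianGroup.lift_apply_of]
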